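/- Let K = closure(D) × [0,1] ⊆ ℂ × ℝ and let f : K → ℂ be continuous such that for each s ∈ [0,1] the function z ↦ f(z,s) is holomorphic on the open unit disc D. Then f can be uniformly approximated on K by functions of the form P(z,s) where P is a polynomial in the two variables z and s (with complex coefficients). -/

import Mathlib

open Metric Complex Set Filter

lemma disc_approx (g : ℂ → ℂ) (hc : ContinuousOn g (closedBall 0 1))
    (hd : DifferentiableOn ℂ g (ball 0 1)) {ε : ℝ} (hε : 0 < ε) :
    ∃ q : Polynomial ℂ, ∀ z ∈ closedBall (0 : ℂ) 1, ‖g z - q.eval z‖ < ε := by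
  have huc := (isCompact_closedBall (0:ℂ) 1).uniformContinuousOn_of_continuous hc
  rw [Metric.uniformContinuousOn_iff] at huc
  obtain ⟨δ, hδ, hδ'⟩ := huc (ε/2) (by positivity)
  set r : ℝ := max (1 - δ/2) (1/2) with hr_def
  have hr0 : (0:ℝ) < r := lt_of_lt_of_le (by norm_num) (le_max_right _ _)
  have hr1 : r < 1 := by
    apply max_lt <;> [linarith; norm_num]
  have hrz : ∀ z : ℂ, z ∈ closedBall (0:ℂ) 1 → dist (r * z) z < δ := by
    intro z hz
    rw [mem_closedBall, dist_zero_right] at hz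
    rw [dist_eq_norm]
    have : (r:ℂ) * z - z = (r - 1 : ℂ) * z := by ring
    rw [this, norm_mul]
    have h1 : ‖((r:ℂ) - 1)‖ = 1 - r := by
      rw [show ((r:ℂ) - 1) = ((r - 1 : ℝ) : ℂ) by push_cast; ring, Complex.norm_real,
        Real.norm_eq_abs, abs_of_nonpos (by linarith)]
      ring
    have h2 : 1 - r ≤ δ/2 := by
      have := le_max_left (1 - δ/2) (1/2)
      simp only [← hr_def] at this
      linarith
    calc ‖((r:ℂ) - 1)‖ * ‖z‖ ≤ (1 - r) * 1 := by
          rw [h1]; apply mul_le_mul_of_nonneg_left hz (by linarith)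
      _ < δ := by linarith
  -- the dilated function
  set h : ℂ → ℂ := fun z => g (r * z) with hh_def
  set R : NNReal := ⟨(1 + 1/r)/2, by positivity⟩ with hR_def
  have hRr : (R : ℝ) = (1 + 1/r)/2 := rfl
  have h1r : 1 < 1/r := (one_lt_one_div hr0 hr1)
  have hR1 : (1:ℝ) < R := by rw [hRr]; linarith
  have hmaps : ∀ z : ℂ, z ∈ closedBall (0:ℂ) R → (r:ℂ) * z ∈ ball (0:ℂ) 1 := by
    intro z hz
    rw [mem_closedBall, dist_zero_right] at hz
    rw [mem_ball, dist_zero_right, norm_mul, Complex.norm_real, Real.norm_eq_abs, abs_of_pos hr0]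
    have : r * ‖z‖ ≤ r * R := mul_le_mul_of_nonneg_left hz hr0.le
    have hrR : r * R < 1 := by
      rw [hRr]
      have : r * ((1 + 1/r)/2) = (r + 1)/2 := by field_simp
      rw [this]; linarith
    linarith
  have hdh : DifferentiableOn ℂ h (closedBall 0 R) := by
    intro z hz
    exact ((hd _ (hmaps z hz)).comp z
      (((differentiable_id.const_mul _) z).differentiableWithinAt)
      (fun w hw => hmaps w hw)).mono (fun _ hw => hw) |>.congr (fun _ _ => rfl) rfl
  have hps := hdh.hasFPowerSeriesOnBall (by exact_mod_cast lt_trans one_pos hR1)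
  set p := cauchyPowerSeries h 0 R with hp_def
  have hRlt : ((1:NNReal) : ENNReal) < (R : ENNReal) := by
    rw [ENNReal.coe_lt_coe]
    exact_mod_cast hR1
  set r2 : NNReal := ⟨(1 + R)/2, by positivity⟩ with hr2_def
  have hr2a : (1:ℝ) < r2 := by
    have : (r2:ℝ) = (1 + R)/2 := rfl
    rw [this]; linarith
  have hr2b : ((r2:NNReal) : ENNReal) < (R : ENNReal) := by
    rw [ENNReal.coe_lt_coe, ← NNReal.coe_lt_coe]
    show ((1:ℝ) + R)/2 < R
    linarith
  have htu := hps.tendstoUniformlyOn' hr2b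
  rw [Metric.tendstoUniformlyOn_iff] at htu
  obtain ⟨N, hN⟩ := (htu (ε/2) (by positivity)).exists
  set q : Polynomial ℂ := ∑ k ∈ Finset.range N, Polynomial.C (p k (fun _ => 1)) * Polynomial.X ^ k
    with hq_def
  have hqeval : ∀ y : ℂ, q.eval y = p.partialSum N y := by
    intro y
    rw [hq_def, FormalMultilinearSeries.partialSum, Polynomial.eval_finset_sum]
    apply Finset.sum_congr rfl
    intro k _
    have hy : (fun _ : Fin k => y) = (fun _ : Fin k => y • (1:ℂ)) := by simp
    rw [hy, ContinuousMultilinearMap.map_smul_univ]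
    simp only [Finset.prod_const, Finset.card_univ, Fintype.card_fin, smul_eq_mul,
      Polynomial.eval_mul, Polynomial.eval_C, Polynomial.eval_pow, Polynomial.eval_X]
    ring
  refine ⟨q, fun z hz => ?_⟩
  have hrz1 : (r:ℂ) * z ∈ closedBall (0:ℂ) 1 := by
    rw [mem_closedBall, dist_zero_right] at hz ⊢
    rw [norm_mul, Complex.norm_real, Real.norm_eq_abs, abs_of_pos hr0]
    nlinarith
  have h1 : ‖g z - h z‖ < ε/2 := by
    rw [← dist_eq_norm]
    exact hδ' z hz _ hrz1 (by rw [dist_comm]; exact hrz z hz)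
  have h2 : ‖h z - q.eval z‖ < ε/2 := by
    rw [hqeval, ← dist_eq_norm]
    have hz' : z ∈ ball (0:ℂ) r2 := by
      rw [mem_ball, dist_zero_right]
      rw [mem_closedBall, dist_zero_right] at hz
      exact lt_of_le_of_lt hz hr2a
    have := hN z hz'
    simpa using this
  calc ‖g z - q.eval z‖ ≤ ‖g z - h z‖ + ‖h z - q.eval z‖ := by
        have : g z - q.eval z = (g z - h z) + (h z - q.eval z) := by ring
        rw [this]; exact norm_add_le _ _
    _ < ε/2 + ε/2 := add_lt_add h1 h2
    _ = ε := by ring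

lemma eval_aeval_X (v : Fin 2 → ℂ) (i : Fin 2) (q : Polynomial ℂ) :
    MvPolynomial.eval v (Polynomial.aeval (MvPolynomial.X i) q) = Polynomial.eval (v i) q := by
  rw [Polynomial.aeval_def, Polynomial.hom_eval₂]
  simp only [MvPolynomial.eval_X]
  have : (MvPolynomial.eval v : MvPolynomial (Fin 2) ℂ →+* ℂ).comp
      (algebraMap ℂ (MvPolynomial (Fin 2) ℂ)) = RingHom.id ℂ := by
    ext c; simp
  rw [this]
  rfl

theorem approximation_on_disc_times_interval
    (f : ℂ × ℝ → ℂ)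
    (hc : ContinuousOn f (closedBall (0 : ℂ) 1 ×ˢ Icc (0 : ℝ) 1))
    (hd : ∀ s ∈ Icc (0 : ℝ) 1,
      DifferentiableOn ℂ (fun z => f (z, s)) (ball (0 : ℂ) 1)) :
    ∀ ε > (0 : ℝ), ∃ P : MvPolynomial (Fin 2) ℂ,
      ∀ p ∈ closedBall (0 : ℂ) 1 ×ˢ Icc (0 : ℝ) 1,
        ‖f p - MvPolynomial.eval ![p.1, (p.2 : ℂ)] P‖ < ε := by
  intro ε hε
  have hK : IsCompact (closedBall (0:ℂ) 1 ×ˢ Icc (0:ℝ) 1) :=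
    (isCompact_closedBall _ _).prod isCompact_Icc
  obtain ⟨M, hM⟩ := hK.exists_bound_of_continuousOn hc
  have hM0 : 0 ≤ M := le_trans (norm_nonneg _)
    (hM (0,0) (Set.mk_mem_prod (by simp) (by norm_num)))
  have huc := hK.uniformContinuousOn_of_continuous hc
  rw [Metric.uniformContinuousOn_iff] at huc
  obtain ⟨δ, hδ, hδ'⟩ := huc (ε/4) (by positivity)
  obtain ⟨n, hn⟩ := exists_nat_ge (max 1 (2*M/(δ^2*ε)))
  have hn1 : (1:ℝ) ≤ n := le_trans (le_max_left _ _) hn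
  have hn0 : 0 < (n:ℝ) := by linarith
  have hnB : 2*M/(δ^2*ε) ≤ n := le_trans (le_max_right _ _) hn
  have hnode : ∀ k : Fin (n+1), ((k:ℝ)/n) ∈ Icc (0:ℝ) 1 := by
    intro k
    constructor
    · positivity
    · rw [div_le_one hn0]
      exact_mod_cast Nat.lt_succ_iff.mp k.2
  have hpk : ∀ k : Fin (n+1), ∃ q : Polynomial ℂ,
      ∀ z ∈ closedBall (0:ℂ) 1, ‖f (z, (k:ℝ)/n) - q.eval z‖ < ε/4 := by
    intro k
    apply disc_approx
    · apply hc.comp (Continuous.continuousOn (by fun_prop))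
      intro z hz
      exact Set.mk_mem_prod hz (hnode k)
    · exact hd _ (hnode k)
    · positivity
  choose qs hqs using hpk
  refine ⟨∑ k : Fin (n+1), (Polynomial.aeval (MvPolynomial.X 0) (qs k)) *
    (Polynomial.aeval (MvPolynomial.X 1) (bernsteinPolynomial ℂ n k)), ?_⟩
  rintro ⟨z, s⟩ hzs
  rw [Set.mem_prod] at hzs
  obtain ⟨hz, hs⟩ := hzs
  set x : unitInterval := ⟨s, hs⟩ with hx_def
  set B : Fin (n+1) → ℝ := fun k => (bernsteinPolynomial ℝ n k).eval s with hB_def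
  have hBb : ∀ k : Fin (n+1), bernstein n k x = B k := fun k => rfl
  have hB0 : ∀ k : Fin (n+1), 0 ≤ B k := fun k => by rw [← hBb]; exact bernstein_nonneg
  have hB1 : ∑ k : Fin (n+1), B k = 1 := by
    rw [← bernstein.probability n x]
    exact Finset.sum_congr rfl fun k _ => (hBb k).symm
  have hvar : ∑ k : Fin (n+1), (s - (k:ℝ)/n)^2 * B k = s * (1 - s) / n := by
    have := bernstein.variance (by exact_mod_cast hn0.ne') x
    rw [← this]
    apply Finset.sum_congr rfl
    intro k _
    rw [← hBb]
    congr 1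
  -- evaluation of P
  have hPeval : MvPolynomial.eval ![(z,s).1, ((z,s).2 : ℂ)]
      (∑ k : Fin (n+1), (Polynomial.aeval (MvPolynomial.X 0) (qs k)) *
        (Polynomial.aeval (MvPolynomial.X 1) (bernsteinPolynomial ℂ n k)))
      = ∑ k : Fin (n+1), (qs k).eval z * ((B k : ℝ) : ℂ) := by
    rw [map_sum]
    apply Finset.sum_congr rfl
    intro k _
    rw [map_mul, eval_aeval_X, eval_aeval_X]
    simp only [Matrix.cons_val_zero, Matrix.cons_val_one, Matrix.head_cons]
    congr 1
    rw [← bernsteinPolynomial.map (algebraMap ℝ ℂ) n k, Polynomial.eval_map]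
    exact Polynomial.eval₂_at_apply (algebraMap ℝ ℂ) s
  rw [hPeval]
  -- main estimate
  have hsum1 : (∑ k : Fin (n+1), ((B k : ℝ) : ℂ)) = 1 := by
    rw [← Complex.ofReal_sum, hB1, Complex.ofReal_one]
  have hsplit : f (z, s) - ∑ k : Fin (n+1), (qs k).eval z * ((B k : ℝ) : ℂ)
      = ∑ k : Fin (n+1), (f (z, s) - (qs k).eval z) * ((B k : ℝ) : ℂ) := by
    rw [Finset.sum_congr rfl (fun k _ => sub_mul (f (z,s)) ((qs k).eval z) _),
      Finset.sum_sub_distrib, ← Finset.mul_sum, hsum1, mul_one]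
  rw [hsplit]
  set c : ℝ := 2*M/δ^2 with hc_def
  have hc0 : 0 ≤ c := by positivity
  have key : ∀ k : Fin (n+1), ‖(f (z, s) - (qs k).eval z) * ((B k : ℝ) : ℂ)‖
      ≤ (ε/4 + ε/4) * B k + c * ((s - (k:ℝ)/n)^2 * B k) := by
    intro k
    have hmem : (z, (k:ℝ)/n) ∈ closedBall (0:ℂ) 1 ×ˢ Icc (0:ℝ) 1 :=
      Set.mk_mem_prod hz (hnode k)
    have hmem' : (z, s) ∈ closedBall (0:ℂ) 1 ×ˢ Icc (0:ℝ) 1 := Set.mk_mem_prod hz hs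
    have hq := hqs k z hz
    have hnorm : ‖(f (z, s) - (qs k).eval z) * ((B k : ℝ) : ℂ)‖
        = ‖f (z, s) - (qs k).eval z‖ * B k := by
      rw [norm_mul, Complex.norm_real, Real.norm_eq_abs, _root_.abs_of_nonneg (hB0 k)]
    rw [hnorm]
    have htri : ‖f (z, s) - (qs k).eval z‖
        ≤ ‖f (z, s) - f (z, (k:ℝ)/n)‖ + ‖f (z, (k:ℝ)/n) - (qs k).eval z‖ := by
      have : f (z, s) - (qs k).eval z
          = (f (z, s) - f (z, (k:ℝ)/n)) + (f (z, (k:ℝ)/n) - (qs k).eval z) := by ring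
      rw [this]; exact norm_add_le _ _
    by_cases hnear : |s - (k:ℝ)/n| < δ
    · have hd1 : ‖f (z, s) - f (z, (k:ℝ)/n)‖ < ε/4 := by
        rw [← dist_eq_norm]
        apply hδ' _ hmem' _ hmem
        rw [Prod.dist_eq]
        simp only [dist_self, Real.dist_eq]
        rw [max_eq_right (abs_nonneg _)]
        exact hnear
      have h1 : ‖f (z, s) - (qs k).eval z‖ ≤ ε/4 + ε/4 := by
        have := htri; linarith [hd1, hq]
      nlinarith [hB0 k, sq_nonneg (s - (k:ℝ)/n), mul_nonneg hc0
        (mul_nonneg (sq_nonneg (s - (k:ℝ)/n)) (hB0 k)),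
        mul_le_mul_of_nonneg_right h1 (hB0 k)]
    · push_neg at hnear
      have hcδ : c * δ^2 = 2*M := by
        rw [hc_def]; field_simp
      have h2M : ‖f (z, s) - (qs k).eval z‖ ≤ 2*M + ε/4 := by
        have hb1 : ‖f (z, s) - f (z, (k:ℝ)/n)‖ ≤ 2*M := by
          calc ‖f (z, s) - f (z, (k:ℝ)/n)‖ ≤ ‖f (z, s)‖ + ‖f (z, (k:ℝ)/n)‖ := norm_sub_le _ _
            _ ≤ M + M := add_le_add (hM _ hmem') (hM _ hmem)
            _ = 2*M := by ring
        linarith [htri, hq.le]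
      have hsq : δ^2 ≤ (s - (k:ℝ)/n)^2 := by
        have := sq_le_sq' (by linarith [abs_nonneg (s - (k:ℝ)/n)] : -(|s - (k:ℝ)/n|) ≤ δ)
          hnear
        calc δ^2 ≤ |s - (k:ℝ)/n|^2 := this
          _ = (s - (k:ℝ)/n)^2 := sq_abs _
      have h2Mle : 2*M ≤ c * (s - (k:ℝ)/n)^2 := by
        rw [← hcδ]
        exact mul_le_mul_of_nonneg_left hsq hc0
      nlinarith [hB0 k, mul_le_mul_of_nonneg_right h2M (hB0 k),
        mul_le_mul_of_nonneg_right h2Mle (hB0 k)]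
  calc ‖∑ k : Fin (n+1), (f (z, s) - (qs k).eval z) * ((B k : ℝ) : ℂ)‖
      ≤ ∑ k : Fin (n+1), ‖(f (z, s) - (qs k).eval z) * ((B k : ℝ) : ℂ)‖ :=
        norm_sum_le _ _
    _ ≤ ∑ k : Fin (n+1), ((ε/4 + ε/4) * B k + c * ((s - (k:ℝ)/n)^2 * B k)) :=
        Finset.sum_le_sum fun k _ => key k
    _ = (ε/4 + ε/4) * (∑ k : Fin (n+1), B k)
        + c * (∑ k : Fin (n+1), (s - (k:ℝ)/n)^2 * B k) := by
        rw [Finset.sum_add_distrib, ← Finset.mul_sum, ← Finset.mul_sum]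
    _ = (ε/4 + ε/4) + c * (s * (1 - s) / n) := by rw [hB1, hvar, mul_one]
    _ < ε := by
        have hs01 : 0 ≤ s ∧ s ≤ 1 := hs
        have hss : s * (1 - s) ≤ 1/4 := by nlinarith [sq_nonneg (s - 1/2)]
        have hnB' : 2*M ≤ n * (δ^2*ε) := by
          rwa [div_le_iff₀ (by positivity)] at hnB
        have hcn : c ≤ n * ε := by
          rw [hc_def, div_le_iff₀ (by positivity)]
          nlinarith
        have ha : s * (1 - s) / n ≤ 1/(4*n) := by
          rw [div_le_div_iff₀ hn0 (by positivity)]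
          nlinarith
        have hb : c * (s * (1 - s) / n) ≤ c * (1/(4*n)) :=
          mul_le_mul_of_nonneg_left ha hc0
        have hcc : c * (1/(4*n)) ≤ ε/4 := by
          rw [mul_one_div, div_le_div_iff₀ (by positivity) (by norm_num)]
          nlinarith
        linarith
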